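/- Let Φ ∈ C(I, K_c(ℝ)) with fractal function Φ^α. Define D : (I × K_c(ℝ))² → [0,∞) by D((t,S₁),(w,S₂)) = |t − w| + H_d(S₁ + Φ^α(w), S₂ + Φ^α(t)). Then (I × K_c(ℝ), D) is a complete metric space. -/

import Mathlib

open Set Metric Pointwise TopologicalSpace
open scoped ENNReal NNReal

/-- `K_c(ℝ)`: the nonempty compact convex subsets of `ℝ`. -/
def KcReal : Type := {K : NonemptyCompacts ℝ // Convex ℝ (K : Set ℝ)}



lemma auxEdist {A B : Set ℝ} (hA : IsCompact A) (hB : IsCompact B)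
    (hAne : A.Nonempty) (hBne : B.Nonempty) : EMetric.hausdorffEdist A B ≠ ⊤ :=
  Metric.hausdorffEdist_ne_top_of_nonempty_of_bounded hAne hBne hA.isBounded hB.isBounded

lemma auxInf {A B : Set ℝ} (hA : IsCompact A) (hB : IsCompact B)
    (hAne : A.Nonempty) (hBne : B.Nonempty) :
    sInf B ≤ sInf A + hausdorffDist A B := by
  have haA : sInf A ∈ A := hA.sInf_mem hAne
  obtain ⟨b, hbB, hb⟩ := hB.exists_infDist_eq_dist hBne (sInf A)
  have h1 : infDist (sInf A) B ≤ hausdorffDist A B :=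
    infDist_le_hausdorffDist_of_mem haA (auxEdist hA hB hAne hBne)
  have h2 : sInf B ≤ b := csInf_le hB.bddBelow hbB
  have h3 : b - sInf A ≤ dist (sInf A) b := by
    rw [dist_comm, Real.dist_eq]; exact le_abs_self _
  linarith [hb ▸ h3]

lemma auxSup {A B : Set ℝ} (hA : IsCompact A) (hB : IsCompact B)
    (hAne : A.Nonempty) (hBne : B.Nonempty) :
    sSup B ≤ sSup A + hausdorffDist A B := by
  have hbB : sSup B ∈ B := hB.sSup_mem hBne
  obtain ⟨c, hcA, hc⟩ := hA.exists_infDist_eq_dist hAne (sSup B)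
  have h1 : infDist (sSup B) A ≤ hausdorffDist A B := by
    rw [hausdorffDist_comm]
    exact infDist_le_hausdorffDist_of_mem hbB (auxEdist hB hA hBne hAne)
  have h2 : c ≤ sSup A := le_csSup hA.bddAbove hcA
  have h3 : sSup B - c ≤ dist (sSup B) c := by
    rw [Real.dist_eq]; exact le_abs_self _
  linarith [hc ▸ h3]

lemma auxInfAbs {A B : Set ℝ} (hA : IsCompact A) (hB : IsCompact B)
    (hAne : A.Nonempty) (hBne : B.Nonempty) :
    |sInf A - sInf B| ≤ hausdorffDist A B := by
  rw [abs_sub_le_iff]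
  constructor
  · have := auxInf hB hA hBne hAne; rw [hausdorffDist_comm] at this; linarith
  · linarith [auxInf hA hB hAne hBne]

lemma auxSupAbs {A B : Set ℝ} (hA : IsCompact A) (hB : IsCompact B)
    (hAne : A.Nonempty) (hBne : B.Nonempty) :
    |sSup A - sSup B| ≤ hausdorffDist A B := by
  rw [abs_sub_le_iff]
  constructor
  · have := auxSup hB hA hBne hAne; rw [hausdorffDist_comm] at this; linarith
  · linarith [auxSup hA hB hAne hBne]

lemma auxHIcc {a b c d : ℝ} (hab : a ≤ b) (hcd : c ≤ d) :
    hausdorffDist (Icc a b) (Icc c d) = max |a - c| |b - d| := by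
  refine le_antisymm ?_ ?_
  · refine hausdorffDist_le_of_mem_dist (le_max_iff.2 (Or.inl (abs_nonneg _))) ?_ ?_
    · intro x hx
      refine ⟨max c (min x d), ⟨le_max_left _ _, max_le hcd (min_le_right _ _)⟩, ?_⟩
      rcases le_total x c with h | h
      · have he : max c (min x d) = c := by
          rw [min_eq_left (h.trans hcd), max_eq_left h]
        rw [he, Real.dist_eq]
        refine le_trans ?_ (le_max_left _ _)
        calc |x - c| = c - x := by rw [abs_sub_comm, abs_of_nonneg (by linarith)]
        _ ≤ c - a := by linarith [hx.1]
        _ ≤ |a - c| := by rw [abs_sub_comm]; exact le_abs_self _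
      · rcases le_total x d with h' | h'
        · have he : max c (min x d) = x := by rw [min_eq_left h', max_eq_right h]
          simp [he]
        · have he : max c (min x d) = d := by rw [min_eq_right h', max_eq_right hcd]
          rw [he, Real.dist_eq]
          refine le_trans ?_ (le_max_right _ _)
          calc |x - d| = x - d := abs_of_nonneg (by linarith)
          _ ≤ b - d := by linarith [hx.2]
          _ ≤ |b - d| := le_abs_self _
    · intro x hx
      refine ⟨max a (min x b), ⟨le_max_left _ _, max_le hab (min_le_right _ _)⟩, ?_⟩
      rcases le_total x a with h | h
      · have he : max a (min x b) = a := by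
          rw [min_eq_left (h.trans hab), max_eq_left h]
        rw [he, Real.dist_eq]
        refine le_trans ?_ (le_max_left _ _)
        calc |x - a| = a - x := by rw [abs_sub_comm, abs_of_nonneg (by linarith)]
        _ ≤ a - c := by linarith [hx.1]
        _ ≤ |a - c| := le_abs_self _
      · rcases le_total x b with h' | h'
        · have he : max a (min x b) = x := by rw [min_eq_left h', max_eq_right h]
          simp [he]
        · have he : max a (min x b) = b := by rw [min_eq_right h', max_eq_right hab]
          rw [he, Real.dist_eq]
          refine le_trans ?_ (le_max_right _ _)
          calc |x - b| = x - b := abs_of_nonneg (by linarith)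
          _ ≤ d - b := by linarith [hx.2]
          _ ≤ |b - d| := by rw [abs_sub_comm]; exact le_abs_self _
  · refine max_le ?_ ?_
    · have := auxInfAbs isCompact_Icc isCompact_Icc (nonempty_Icc.2 hab) (nonempty_Icc.2 hcd)
      rwa [csInf_Icc hab, csInf_Icc hcd] at this
    · have := auxSupAbs isCompact_Icc isCompact_Icc (nonempty_Icc.2 hab) (nonempty_Icc.2 hcd)
      rwa [csSup_Icc hab, csSup_Icc hcd] at this

lemma auxRepr (K : NonemptyCompacts ℝ) (hK : Convex ℝ (K : Set ℝ)) :
    (K : Set ℝ) = Icc (sInf (K : Set ℝ)) (sSup (K : Set ℝ)) :=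
  eq_Icc_of_connected_compact ⟨K.nonempty, hK.isPreconnected⟩ K.isCompact

lemma auxInfLeSup (K : NonemptyCompacts ℝ) :
    sInf (K : Set ℝ) ≤ sSup (K : Set ℝ) :=
  csInf_le_csSup K.nonempty K.isCompact.bddBelow K.isCompact.bddAbove

lemma auxLipInf : LipschitzWith 1 (fun K : NonemptyCompacts ℝ => sInf (K : Set ℝ)) := by
  refine LipschitzWith.of_dist_le_mul fun K L => ?_
  rw [Real.dist_eq, NNReal.coe_one, one_mul]
  have hd : dist K L = hausdorffDist (K : Set ℝ) (L : Set ℝ) := rfl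
  rw [hd]
  exact auxInfAbs K.isCompact L.isCompact K.nonempty L.nonempty

lemma auxLipSup : LipschitzWith 1 (fun K : NonemptyCompacts ℝ => sSup (K : Set ℝ)) := by
  refine LipschitzWith.of_dist_le_mul fun K L => ?_
  rw [Real.dist_eq, NNReal.coe_one, one_mul]
  have hd : dist K L = hausdorffDist (K : Set ℝ) (L : Set ℝ) := rfl
  rw [hd]
  exact auxSupAbs K.isCompact L.isCompact K.nonempty L.nonempty


/-- The function `D((t,S₁),(w,S₂)) = |t−w| + H_d(S₁ + Φ^α(w), S₂ + Φ^α(t))` turns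
`I × K_c(ℝ)` into a complete metric space, where `Φ^α ∈ C(I, K_c(ℝ))` is a fixed
continuous set-valued map and `+` is the Minkowski sum. -/
theorem stmt_11 (a T : ℝ) (haT : a < T)
    (Φα : ℝ → NonemptyCompacts ℝ)
    (hΦα : ContinuousOn Φα (Icc a T))
    (hΦαconv : ∀ t ∈ Icc a T, Convex ℝ (Φα t : Set ℝ)) :
    ∃ m : MetricSpace (↥(Icc a T) × KcReal),
      (∀ x y : ↥(Icc a T) × KcReal,
        m.dist x y = |(x.1 : ℝ) - (y.1 : ℝ)| +
          Metric.hausdorffDist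
            ((x.2.1 : Set ℝ) + (Φα (y.1 : ℝ) : Set ℝ))
            ((y.2.1 : Set ℝ) + (Φα (x.1 : ℝ) : Set ℝ))) ∧
      @CompleteSpace (↥(Icc a T) × KcReal) m.toUniformSpace := by
  classical
  haveI : Fact ((1:ℝ≥0∞) ≤ 1) := ⟨le_refl _⟩
  let p : ℝ → ℝ := fun t => sInf (Φα t : Set ℝ)
  let q : ℝ → ℝ := fun t => sSup (Φα t : Set ℝ)
  let f : ↥(Icc a T) × KcReal → WithLp 1 (ℝ × (ℝ × ℝ)) := fun x =>
    WithLp.toLp 1 ((x.1 : ℝ), (sInf (x.2.1 : Set ℝ) - p (x.1 : ℝ), sSup (x.2.1 : Set ℝ) - q (x.1 : ℝ)))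
  have hinj : Function.Injective f := by
    rintro ⟨⟨t, ht⟩, K, hK⟩ ⟨⟨w, hw⟩, L, hL⟩ h
    have h1 : t = w := congrArg (fun z : WithLp 1 (ℝ × (ℝ × ℝ)) => z.ofLp.1) h
    subst h1
    have h2 : sInf (K : Set ℝ) - p t = sInf (L : Set ℝ) - p t :=
      congrArg (fun z : WithLp 1 (ℝ × (ℝ × ℝ)) => z.ofLp.2.1) h
    have h3 : sSup (K : Set ℝ) - q t = sSup (L : Set ℝ) - q t :=
      congrArg (fun z : WithLp 1 (ℝ × (ℝ × ℝ)) => z.ofLp.2.2) h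
    have hinf : sInf (K : Set ℝ) = sInf (L : Set ℝ) := by linarith
    have hsup : sSup (K : Set ℝ) = sSup (L : Set ℝ) := by linarith
    have hKL : (K : Set ℝ) = (L : Set ℝ) := by
      rw [auxRepr K hK, auxRepr L hL, hinf, hsup]
    exact Prod.ext rfl (Subtype.ext (NonemptyCompacts.ext hKL))
  letI m : MetricSpace (↥(Icc a T) × KcReal) := MetricSpace.induced f hinj inferInstance
  refine ⟨m, fun x y => ?_, ?_⟩
  · show dist (f x) (f y) = _
    obtain ⟨⟨t, ht⟩, K, hK⟩ := x
    obtain ⟨⟨w, hw⟩, L, hL⟩ := y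
    have hKe := auxRepr K hK
    have hLe := auxRepr L hL
    have hΦt := auxRepr (Φα t) (hΦαconv t ht)
    have hΦw := auxRepr (Φα w) (hΦαconv w hw)
    rw [WithLp.prod_dist_eq_add (by norm_num)]
    simp only [ENNReal.toReal_one, Real.rpow_one, one_div_one]
    rw [Prod.dist_eq]
    rw [hKe, hLe, hΦt, hΦw,
      Icc_add_Icc (auxInfLeSup K) (auxInfLeSup (Φα w)),
      Icc_add_Icc (auxInfLeSup L) (auxInfLeSup (Φα t)),
      auxHIcc (add_le_add (auxInfLeSup K) (auxInfLeSup (Φα w)))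
        (add_le_add (auxInfLeSup L) (auxInfLeSup (Φα t)))]
    rw [Real.dist_eq, Real.dist_eq, Real.dist_eq]
    congr 2 <;>
    · dsimp only [f, WithLp.toLp_snd]
      simp only [p, q, csInf_Icc (auxInfLeSup K), csInf_Icc (auxInfLeSup L),
        csSup_Icc (auxInfLeSup K), csSup_Icc (auxInfLeSup L)]
      congr 1
      ring
  · -- completeness
    have hiso : Isometry f := Isometry.of_dist_eq fun x y => rfl
    have hpc : ContinuousOn p (Icc a T) := auxLipInf.continuous.comp_continuousOn hΦα
    have hqc : ContinuousOn q (Icc a T) := auxLipSup.continuous.comp_continuousOn hΦα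
    have h1 : ContinuousOn (fun y : ℝ × ℝ × ℝ => p y.1) (Icc a T ×ˢ (univ : Set (ℝ × ℝ))) :=
      hpc.comp continuous_fst.continuousOn (fun y hy => hy.1)
    have h2 : ContinuousOn (fun y : ℝ × ℝ × ℝ => q y.1) (Icc a T ×ˢ (univ : Set (ℝ × ℝ))) :=
      hqc.comp continuous_fst.continuousOn (fun y hy => hy.1)
    have hg : ContinuousOn (fun y : ℝ × ℝ × ℝ => y.2.1 + p y.1 - (y.2.2 + q y.1))
        (Icc a T ×ˢ (univ : Set (ℝ × ℝ))) :=
      ((continuous_snd.fst.continuousOn.add h1).sub (continuous_snd.snd.continuousOn.add h2))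
    have hS : IsClosed {y : ℝ × ℝ × ℝ | y.1 ∈ Icc a T ∧ y.2.1 + p y.1 ≤ y.2.2 + q y.1} := by
      have hc := hg.preimage_isClosed_of_isClosed (isClosed_Icc.prod isClosed_univ)
        (isClosed_Iic (a := (0:ℝ)))
      convert hc using 1
      ext y
      simp only [mem_setOf_eq, mem_inter_iff, mem_prod, mem_univ, and_true, mem_preimage, mem_Iic]
      constructor
      · rintro ⟨hy1, hy2⟩; exact ⟨hy1, by linarith⟩
      · rintro ⟨hy1, hy2⟩; exact ⟨hy1, by linarith⟩
    have hrange : range f = (WithLp.prodContinuousLinearEquiv 1 ℝ ℝ (ℝ × ℝ)) ⁻¹'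
        {y : ℝ × ℝ × ℝ | y.1 ∈ Icc a T ∧ y.2.1 + p y.1 ≤ y.2.2 + q y.1} := by
      ext y
      simp only [mem_range, mem_preimage, mem_setOf_eq]
      constructor
      · rintro ⟨⟨⟨t, ht⟩, K, hK⟩, rfl⟩
        refine ⟨ht, ?_⟩
        simpa [f] using auxInfLeSup K
      · rintro ⟨hy1, hy2⟩
        set t : ℝ := y.ofLp.1
        set α : ℝ := y.ofLp.2.1
        set β : ℝ := y.ofLp.2.2
        have huv : α + p t ≤ β + q t := hy2
        refine ⟨(⟨t, hy1⟩, ⟨⟨⟨Icc (α + p t) (β + q t), isCompact_Icc⟩,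
          nonempty_Icc.2 huv⟩, convex_Icc _ _⟩), ?_⟩
        show WithLp.toLp 1 ((t : ℝ), (sInf (Icc (α + p t) (β + q t)) - p t,
          sSup (Icc (α + p t) (β + q t)) - q t)) = y
        rw [csInf_Icc huv, csSup_Icc huv]
        rw [← WithLp.toLp_ofLp (x := y)]
        refine congrArg (WithLp.toLp 1) (Prod.ext rfl (Prod.ext ?_ ?_)) <;> (simp; rfl)
    have hclosed : IsClosed (range f) := by
      rw [hrange]
      exact hS.preimage (WithLp.prodContinuousLinearEquiv 1 ℝ ℝ (ℝ × ℝ)).continuous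
    exact (completeSpace_iff_isComplete_range hiso.isUniformInducing).2 hclosed.isComplete
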